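/- Let (r,ρ) ∈ NC, i.e., 0 < r < 1 < ρ and r^k = ρ^ℓ implies k = ℓ = 0 for integers k, ℓ. Let L_{r,ρ} = {(x,y) ∈ [0,1]² : y = rx or y = ρx} and M_{r,ρ} the Mahavier product of L_{r,ρ} with shift map σ_{r,ρ}. Then (M_{r,ρ}, σ_{r,ρ}) has sensitive dependence on initial conditions. -/

import Mathlib

open Set

/-- The Mahavier product `M_{r,ρ}` of the relation `L_{r,ρ}`: sequences in `[0,1]`
where each next coordinate is `r` or `ρ` times the previous one. -/
def Mset (r ρ : ℝ) : Set (ℕ → ℝ) :=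
  {x | ∀ i : ℕ, x i ∈ Icc (0:ℝ) 1 ∧ (x (i + 1) = r * x i ∨ x (i + 1) = ρ * x i)}

/-- The shift map on sequences. -/
def shiftMap (x : ℕ → ℝ) : ℕ → ℝ := fun i => x (i + 1)

/-- The product metric `d(x,y) = max_k |y_k - x_k|/2^k` (indices starting at 1). -/
noncomputable def rho (x y : ℕ → ℝ) : ℝ :=
  ⨆ k : ℕ, |y k - x k| / 2 ^ (k + 1)

lemma shift_iter (x : ℕ → ℝ) (n k : ℕ) : (shiftMap^[n] x) k = x (k + n) := by
  induction n generalizing x with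
  | zero => rfl
  | succ n ih =>
    rw [Function.iterate_succ_apply, ih]
    simp only [shiftMap]
    congr 1

lemma abs_diff_le_one {a b : ℝ} (ha : a ∈ Icc (0:ℝ) 1) (hb : b ∈ Icc (0:ℝ) 1) :
    |b - a| ≤ 1 := by
  rw [abs_sub_le_iff]
  constructor <;> linarith [ha.1, ha.2, hb.1, hb.2]

lemma rho_bdd (x y : ℕ → ℝ) (h : ∀ k, |y k - x k| ≤ 1) :
    BddAbove (Set.range fun k : ℕ => |y k - x k| / 2 ^ (k + 1)) := by
  refine ⟨1, ?_⟩
  rintro _ ⟨k, rfl⟩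
  have h1 : (1:ℝ) ≤ 2 ^ (k + 1) := one_le_pow₀ (by norm_num)
  have h2 : (0:ℝ) < 2 ^ (k + 1) := by positivity
  rw [div_le_one h2]
  exact le_trans (h k) h1

lemma le_rho (x y : ℕ → ℝ) (h : ∀ k, |y k - x k| ≤ 1) (k : ℕ) :
    |y k - x k| / 2 ^ (k + 1) ≤ rho x y :=
  le_ciSup (rho_bdd x y h) k

lemma sep_lemma (x y : ℕ → ℝ) (hx : ∀ k, x k ∈ Icc (0:ℝ) 1)
    (hy : ∀ k, y k ∈ Icc (0:ℝ) 1) (n : ℕ) :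
    |y n - x n| / 2 ≤ rho (shiftMap^[n] x) (shiftMap^[n] y) := by
  have h := le_rho (shiftMap^[n] x) (shiftMap^[n] y)
    (fun k => by rw [shift_iter, shift_iter]; exact abs_diff_le_one (hx _) (hy _)) 0
  simpa [shift_iter] using h

lemma rho_le_of_agree (x y : ℕ → ℝ) (N : ℕ) (hagree : ∀ k, k ≤ N → y k = x k)
    (h : ∀ k, |y k - x k| ≤ 1) : rho x y ≤ 1 / 2 ^ (N + 1) := by
  apply ciSup_le
  intro k
  by_cases hk : k ≤ N
  · rw [hagree k hk, sub_self, abs_zero, zero_div]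
    positivity
  · have h2 : (2:ℝ) ^ (N + 1) ≤ 2 ^ (k + 1) := pow_le_pow_right₀ (by norm_num) (by omega)
    have h4 : (0:ℝ) < 2 ^ (k + 1) := by positivity
    calc |y k - x k| / 2 ^ (k + 1) ≤ 1 / 2 ^ (k + 1) := by gcongr; exact h k
      _ ≤ 1 / 2 ^ (N + 1) := one_div_le_one_div_of_le (by positivity) h2

/-- If `(r,ρ) ∈ NC` (i.e. `0 < r < 1 < ρ` and `r^k = ρ^ℓ` only for `k = ℓ = 0`),
then `(M_{r,ρ}, σ_{r,ρ})` has sensitive dependence on initial conditions. -/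
theorem mahavier_lelek_sensitive
    (r ρ : ℝ) (hr0 : 0 < r) (hr1 : r < 1) (hρ : 1 < ρ)
    (hNC : ∀ k ℓ : ℤ, r ^ k = ρ ^ ℓ → k = 0 ∧ ℓ = 0) :
    ∃ ε > (0:ℝ), ∀ x ∈ Mset r ρ, ∀ δ > (0:ℝ), ∃ y ∈ Mset r ρ,
      rho x y < δ ∧ ∃ n : ℕ, 0 < n ∧
        rho (shiftMap^[n] x) (shiftMap^[n] y) > ε := by
  have hρ0 : (0:ℝ) < ρ := lt_trans one_pos hρ
  have ht : (0:ℝ) < 1 / ρ := by positivity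
  have ht1 : 1 / ρ ≤ 1 := by rw [div_le_one hρ0]; linarith
  have e2 : 1 / (2 * ρ) = (1 / ρ) / 2 := by ring
  have e4 : 1 / (4 * ρ) = (1 / ρ) / 4 := by ring
  have e8 : 1 / (8 * ρ) = (1 / ρ) / 8 := by ring
  refine ⟨1 / (8 * ρ), by positivity, ?_⟩
  intro x hx δ hδ
  have hxmem : ∀ k, x k ∈ Icc (0:ℝ) 1 := fun k => (hx k).1
  -- choose N with 1/2^N < δ and 1 ≤ N
  obtain ⟨N0, hN0⟩ := exists_pow_lt_of_lt_one hδ (by norm_num : (1:ℝ)/2 < 1)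
  set N := N0 + 1 with hNdef
  have hN1 : 1 ≤ N := by omega
  have hNδ : (1:ℝ) / 2 ^ N < δ := by
    have h1 : ((1:ℝ)/2) ^ N ≤ (1/2) ^ N0 := pow_le_pow_of_le_one (by norm_num) (by norm_num) (by omega)
    calc (1:ℝ) / 2 ^ N = (1/2) ^ N := by rw [div_pow, one_pow]
      _ ≤ (1/2) ^ N0 := h1
      _ < δ := hN0
  by_cases h0 : x 0 = 0
  · -- x is identically zero
    have hx0 : ∀ k, x k = 0 := by
      intro k
      induction k with
      | zero => exact h0
      | succ k ih => rcases (hx k).2 with h | h <;> rw [h, ih, mul_zero]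
    obtain ⟨M0, hM0⟩ := pow_unbounded_of_one_lt (ρ ^ N / δ) hρ
    set M := max M0 N with hMdef
    have hMN : N ≤ M := le_max_right _ _
    have hMδ : ρ ^ N / ρ ^ M < δ := by
      rw [div_lt_iff₀ (pow_pos hρ0 M)]
      rw [div_lt_iff₀ hδ] at hM0
      calc ρ ^ N < ρ ^ M0 * δ := hM0
        _ ≤ ρ ^ M * δ := by
            have := pow_le_pow_right₀ hρ.le (le_max_left M0 N)
            nlinarith
        _ = δ * ρ ^ M := by ring
    set y : ℕ → ℝ := fun k => if k ≤ M then ρ ^ k / ρ ^ M else r ^ (k - M) with hydef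
    have hyIcc : ∀ k, y k ∈ Icc (0:ℝ) 1 := by
      intro k
      by_cases hk : k ≤ M
      · simp only [hydef, if_pos hk]
        constructor
        · exact le_of_lt (div_pos (pow_pos hρ0 k) (pow_pos hρ0 M))
        · rw [div_le_one (pow_pos hρ0 M)]
          exact pow_le_pow_right₀ hρ.le hk
      · simp only [hydef, if_neg hk]
        exact ⟨pow_nonneg hr0.le _, pow_le_one₀ hr0.le hr1.le⟩
    have hyM : y ∈ Mset r ρ := by
      intro i
      refine ⟨hyIcc i, ?_⟩
      by_cases h1 : i + 1 ≤ M
      · right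
        simp only [hydef, if_pos h1, if_pos (by omega : i ≤ M)]
        rw [pow_succ]; ring
      · left
        by_cases hi : i ≤ M
        · have hiM : i = M := by omega
          simp only [hydef, if_neg h1, if_pos hi]
          have h3 : i + 1 - M = 1 := by omega
          rw [h3, hiM, div_self (pow_pos hρ0 M).ne', pow_one, mul_one]
        · simp only [hydef, if_neg h1, if_neg hi]
          have h3 : i + 1 - M = (i - M) + 1 := by omega
          rw [h3, pow_succ]; ring
    have hb : ∀ k, |y k - x k| ≤ 1 := fun k => abs_diff_le_one (hxmem k) (hyIcc k)
    have hclose : rho x y < δ := by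
      have hle : rho x y ≤ max (ρ ^ N / ρ ^ M) (1 / 2 ^ N) := by
        apply ciSup_le
        intro k
        by_cases hk : k < N
        · refine le_trans ?_ (le_max_left _ _)
          have hyk : y k = ρ ^ k / ρ ^ M := by simp only [hydef, if_pos (by omega : k ≤ M)]
          rw [hx0 k, sub_zero, hyk, abs_of_nonneg (le_of_lt (div_pos (pow_pos hρ0 k) (pow_pos hρ0 M)))]
          calc ρ ^ k / ρ ^ M / 2 ^ (k + 1) ≤ ρ ^ k / ρ ^ M :=
                div_le_self (le_of_lt (div_pos (pow_pos hρ0 k) (pow_pos hρ0 M)))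
                  (one_le_pow₀ (by norm_num))
            _ ≤ ρ ^ N / ρ ^ M :=
                (div_le_div_iff_of_pos_right (pow_pos hρ0 M)).mpr (pow_le_pow_right₀ hρ.le (by omega))
        · refine le_trans ?_ (le_max_right _ _)
          have h2 : (2:ℝ) ^ N ≤ 2 ^ (k + 1) := pow_le_pow_right₀ (by norm_num) (by omega)
          calc |y k - x k| / 2 ^ (k + 1) ≤ 1 / 2 ^ (k + 1) := by
                gcongr
                exact hb k
            _ ≤ 1 / 2 ^ N := one_div_le_one_div_of_le (by positivity) h2
      exact lt_of_le_of_lt hle (max_lt hMδ hNδ)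
    refine ⟨y, hyM, hclose, M, by omega, ?_⟩
    have hyMval : y M = 1 := by
      simp only [hydef, if_pos le_rfl]
      exact div_self (pow_pos hρ0 M).ne'
    have hsep := sep_lemma x y hxmem hyIcc M
    have hval : |y M - x M| / 2 = 1 / 2 := by rw [hx0 M, hyMval, sub_zero, abs_one]
    rw [hval] at hsep
    have hε : 1 / (8 * ρ) < 1 / 2 := by
      rw [e8]; linarith [(div_le_one hρ0).mpr hρ.le, ht]
    calc 1 / (8 * ρ) < 1 / 2 := hε
      _ ≤ _ := hsep
  · -- x never zero
    have hxpos : ∀ k, 0 < x k := by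
      intro k
      induction k with
      | zero => exact lt_of_le_of_ne (hxmem 0).1 (Ne.symm h0)
      | succ k ih =>
        rcases (hx k).2 with h | h <;> rw [h]
        · exact mul_pos hr0 ih
        · exact mul_pos hρ0 ih
    by_cases hbc : ∃ B, ∀ n, n ≥ B → x n ≤ 1 / (2 * ρ)
    · -- eventually small: push y up
      obtain ⟨B0, hB0⟩ := hbc
      set B := max B0 N with hBdef
      have hBN : N ≤ B := le_max_right _ _
      have hBsmall : ∀ n, n ≥ B → x n ≤ 1 / (2 * ρ) :=
        fun n hn => hB0 n (le_trans (le_max_left _ _) hn)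
      set a := x B with hadef
      have ha0 : 0 < a := hxpos B
      have ha1 : a ≤ 1 / (2 * ρ) := hBsmall B le_rfl
      have hex : ∃ m, 1 / ρ < ρ ^ m * a := by
        obtain ⟨m, hm⟩ := pow_unbounded_of_one_lt (1 / (ρ * a)) hρ
        refine ⟨m, ?_⟩
        rw [div_lt_iff₀ hρ0]
        rw [div_lt_iff₀ (mul_pos hρ0 ha0)] at hm
        calc (1:ℝ) < ρ ^ m * (ρ * a) := hm
          _ = ρ ^ m * a * ρ := by ring
      set m := Nat.find hex with hmdef
      have hm : 1 / ρ < ρ ^ m * a := Nat.find_spec hex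
      have hmin : ∀ j, j < m → ρ ^ j * a ≤ 1 / ρ :=
        fun j hj => le_of_not_gt (Nat.find_min hex hj)
      have hm1 : 1 ≤ m := by
        rcases Nat.eq_zero_or_pos m with h | h
        · exfalso
          rw [h, pow_zero, one_mul] at hm
          linarith [e2, ht, ht1]
        · exact h
      have hbound : ∀ j, j ≤ m → ρ ^ j * a ≤ 1 := by
        intro j hj
        cases j with
        | zero => rw [pow_zero, one_mul]; linarith [e2, ht, ht1]
        | succ j =>
          have h1 : ρ ^ j * a ≤ 1 / ρ := hmin j (by omega)
          have : ρ ^ (j + 1) * a = ρ * (ρ ^ j * a) := by rw [pow_succ]; ring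
          rw [this]
          calc ρ * (ρ ^ j * a) ≤ ρ * (1 / ρ) := by nlinarith
            _ = 1 := by field_simp
      set y : ℕ → ℝ := fun k =>
        if k ≤ B then x k else if k ≤ B + m then ρ ^ (k - B) * a
        else r ^ (k - B - m) * (ρ ^ m * a) with hydef
      have hyval1 : ∀ k, B ≤ k → k ≤ B + m → y k = ρ ^ (k - B) * a := by
        intro k h1 h2
        by_cases hk : k ≤ B
        · have : k = B := le_antisymm hk h1
          subst this
          simp only [hydef, if_pos le_rfl, Nat.sub_self, pow_zero, one_mul]
          exact hadef.symm
        · simp only [hydef, if_neg hk, if_pos h2]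
      have hyval2 : ∀ k, B + m ≤ k → y k = r ^ (k - B - m) * (ρ ^ m * a) := by
        intro k h1
        by_cases hk : k ≤ B + m
        · have hkeq : k = B + m := le_antisymm hk h1
          rw [hyval1 k (by omega) hk, hkeq]
          simp
        · simp only [hydef, if_neg (by omega : ¬ k ≤ B), if_neg hk]
      have hyIcc : ∀ k, y k ∈ Icc (0:ℝ) 1 := by
        intro k
        by_cases hk : k ≤ B
        · simp only [hydef, if_pos hk]; exact hxmem k
        · by_cases hk2 : k ≤ B + m
          · rw [hyval1 k (by omega) hk2]
            exact ⟨le_of_lt (mul_pos (pow_pos hρ0 _) ha0), hbound (k - B) (by omega)⟩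
          · rw [hyval2 k (by omega)]
            constructor
            · exact le_of_lt (mul_pos (pow_pos hr0 _) (mul_pos (pow_pos hρ0 _) ha0))
            · exact mul_le_one₀ (pow_le_one₀ hr0.le hr1.le)
                (le_of_lt (mul_pos (pow_pos hρ0 _) ha0)) (hbound m le_rfl)
      have hyM : y ∈ Mset r ρ := by
        intro i
        refine ⟨hyIcc i, ?_⟩
        by_cases h1 : i + 1 ≤ B
        · have hyi : y i = x i := by simp only [hydef, if_pos (by omega : i ≤ B)]
          have hyi1 : y (i + 1) = x (i + 1) := by simp only [hydef, if_pos h1]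
          rw [hyi, hyi1]
          exact (hx i).2
        · by_cases h2 : i + 1 ≤ B + m
          · right
            rw [hyval1 (i + 1) (by omega) h2, hyval1 i (by omega) (by omega)]
            have h3 : i + 1 - B = (i - B) + 1 := by omega
            rw [h3, pow_succ]; ring
          · left
            rw [hyval2 (i + 1) (by omega), hyval2 i (by omega)]
            have h3 : i + 1 - B - m = (i - B - m) + 1 := by omega
            rw [h3, pow_succ]; ring
      have hb : ∀ k, |y k - x k| ≤ 1 := fun k => abs_diff_le_one (hxmem k) (hyIcc k)
      have hclose : rho x y < δ := by
        have h1 := rho_le_of_agree x y B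
          (fun k hk => by simp only [hydef, if_pos hk]) hb
        have h2 : (1:ℝ) / 2 ^ (B + 1) ≤ 1 / 2 ^ N :=
          one_div_le_one_div_of_le (by positivity)
            (pow_le_pow_right₀ (by norm_num) (by omega))
        linarith
      refine ⟨y, hyM, hclose, B + m, by omega, ?_⟩
      have hyn : y (B + m) = ρ ^ m * a := by
        rw [hyval1 (B + m) (by omega) le_rfl]
        congr 2
        omega
      have hxn : x (B + m) ≤ 1 / (2 * ρ) := hBsmall (B + m) (by omega)
      have hsep := sep_lemma x y hxmem hyIcc (B + m)
      have habs : |y (B + m) - x (B + m)| = y (B + m) - x (B + m) := by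
        rw [abs_of_nonneg]
        rw [hyn]
        linarith [e2, ht]
      rw [habs, hyn] at hsep
      have : 1 / (8 * ρ) < (ρ ^ m * a - x (B + m)) / 2 := by
        rw [e8]
        linarith [e2, ht]
      exact lt_of_lt_of_le this hsep
    · -- x is big infinitely often: push y down
      push_neg at hbc
      obtain ⟨T, hT⟩ := exists_pow_lt_of_lt_one (by positivity : (0:ℝ) < 1 / (4 * ρ)) hr1
      have hT1 : 1 ≤ T := by
        rcases Nat.eq_zero_or_pos T with h | h
        · exfalso
          rw [h, pow_zero] at hT
          rw [e4] at hT
          linarith [ht1]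
        · exact h
      obtain ⟨n, hnB, hxn⟩ := hbc (N + T)
      set y : ℕ → ℝ := fun k => if k ≤ N then x k else r ^ (k - N) * x N with hydef
      have hyval : ∀ k, N ≤ k → y k = r ^ (k - N) * x N := by
        intro k h1
        by_cases hk : k ≤ N
        · have : k = N := le_antisymm hk h1
          subst this
          simp only [hydef, if_pos le_rfl, Nat.sub_self, pow_zero, one_mul]
        · simp only [hydef, if_neg hk]
      have hyIcc : ∀ k, y k ∈ Icc (0:ℝ) 1 := by
        intro k
        by_cases hk : k ≤ N
        · simp only [hydef, if_pos hk]; exact hxmem k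
        · rw [hyval k (by omega)]
          exact ⟨mul_nonneg (pow_nonneg hr0.le _) (hxmem N).1,
            mul_le_one₀ (pow_le_one₀ hr0.le hr1.le) (hxmem N).1 (hxmem N).2⟩
      have hyM : y ∈ Mset r ρ := by
        intro i
        refine ⟨hyIcc i, ?_⟩
        by_cases h1 : i + 1 ≤ N
        · have hyi : y i = x i := by simp only [hydef, if_pos (by omega : i ≤ N)]
          have hyi1 : y (i + 1) = x (i + 1) := by simp only [hydef, if_pos h1]
          rw [hyi, hyi1]
          exact (hx i).2
        · left
          rw [hyval (i + 1) (by omega), hyval i (by omega)]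
          have h3 : i + 1 - N = (i - N) + 1 := by omega
          rw [h3, pow_succ]; ring
      have hb : ∀ k, |y k - x k| ≤ 1 := fun k => abs_diff_le_one (hxmem k) (hyIcc k)
      have hclose : rho x y < δ := by
        have h1 := rho_le_of_agree x y N
          (fun k hk => by simp only [hydef, if_pos hk]) hb
        have h2 : (1:ℝ) / 2 ^ (N + 1) ≤ 1 / 2 ^ N :=
          one_div_le_one_div_of_le (by positivity)
            (pow_le_pow_right₀ (by norm_num) (by omega))
        linarith
      refine ⟨y, hyM, hclose, n, by omega, ?_⟩
      have hyn : y n ≤ 1 / (4 * ρ) := by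
        rw [hyval n (by omega)]
        calc r ^ (n - N) * x N ≤ r ^ (n - N) :=
              mul_le_of_le_one_right (pow_nonneg hr0.le _) (hxmem N).2
          _ ≤ r ^ T := pow_le_pow_of_le_one hr0.le hr1.le (by omega)
          _ ≤ 1 / (4 * ρ) := hT.le
      have hyn0 : 0 ≤ y n := (hyIcc n).1
      have hsep := sep_lemma x y hxmem hyIcc n
      have habs : |y n - x n| = x n - y n := by
        rw [abs_sub_comm, abs_of_nonneg]
        linarith [e2, e4, ht]
      rw [habs] at hsep
      have : 1 / (8 * ρ) < (x n - y n) / 2 := by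
        rw [e8]
        linarith [e2, e4, ht]
      exact lt_of_lt_of_le this hsep
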